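/- (Proposition 1, divide-and-conquer bound) Let R be a commutative ring and let u > v be positive natural numbers. If u×u by u×u matrix multiplication over R admits a bilinear algorithm with a multiplications, u×u by u×v matrix multiplication over R admits a bilinear algorithm with b multiplications, and v×v by v×u matrix multiplication over R admits a bilinear algorithm with c multiplications, then (u+v)×(u+v) by (u+v)×(u+v) matrix multiplication over R admits a bilinear algorithm with a + 3b + 3c multiplications; in particular ⟨u+v,u+v,u+v⟩ ≤ ⟨u,u,u⟩ + 3⟨u,u,v⟩ + 3⟨v,v,u⟩. -/

import Mathlib

/-- A bilinear (non-commutative) algorithm computing `u×v` by `v×w` matrix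
multiplication over `R` with `r` multiplications: there are `R`-linear
functionals `f i` on `u×v` matrices, `R`-linear functionals `g i` on `v×w`
matrices, and `u×w` matrices `C i` such that `A * B = ∑ i, f i A * g i B • C i`
for all `A`, `B`. -/
def BilinearAlgorithm (R : Type*) [CommRing R] (u v w r : ℕ) : Prop :=
  ∃ (f : Fin r → (Matrix (Fin u) (Fin v) R →ₗ[R] R))
    (g : Fin r → (Matrix (Fin v) (Fin w) R →ₗ[R] R))
    (C : Fin r → Matrix (Fin u) (Fin w) R),
    ∀ (A : Matrix (Fin u) (Fin v) R) (B : Matrix (Fin v) (Fin w) R),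
      A * B = ∑ i, (f i A * g i B) • C i

namespace DivideAndConquerAux

open Matrix

variable {R : Type*} [CommRing R]

/-- left multiplication as a linear map -/
def lmul {α β γ : Type*} [Fintype β] (X : Matrix α β R) :
    Matrix β γ R →ₗ[R] Matrix α γ R where
  toFun Y := X * Y
  map_add' Y Z := Matrix.mul_add X Y Z
  map_smul' r Y := by rw [Matrix.mul_smul]; rfl

/-- right multiplication as a linear map -/
def rmul {α β γ : Type*} [Fintype β] (Y : Matrix β γ R) :
    Matrix α β R →ₗ[R] Matrix α γ R where
  toFun X := X * Y
  map_add' X Z := Matrix.add_mul X Z Y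
  map_smul' r X := by rw [Matrix.smul_mul]; rfl

@[simp] lemma lmul_apply {α β γ : Type*} [Fintype β] (X : Matrix α β R)
    (Y : Matrix β γ R) : (lmul X : Matrix β γ R →ₗ[R] Matrix α γ R) Y = X * Y := rfl

@[simp] lemma rmul_apply {α β γ : Type*} [Fintype β] (Y : Matrix β γ R)
    (X : Matrix α β R) : (rmul Y : Matrix α β R →ₗ[R] Matrix α γ R) X = X * Y := rfl

/-- `Y ↦ trace (X * Y)` as a linear map -/
def traceMulLin {α γ : Type*} [Fintype α] [Fintype γ] (X : Matrix α γ R) :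
    Matrix γ α R →ₗ[R] R where
  toFun Y := (X * Y).trace
  map_add' Y Z := by rw [Matrix.mul_add, Matrix.trace_add]
  map_smul' r Y := by rw [Matrix.mul_smul, Matrix.trace_smul]; rfl

@[simp] lemma traceMulLin_apply {α γ : Type*} [Fintype α] [Fintype γ]
    (X : Matrix α γ R) (Y : Matrix γ α R) : traceMulLin X Y = (X * Y).trace := rfl

section Blocks

variable {α β γ δ : Type*}

def blk₁₁ : Matrix (α ⊕ β) (γ ⊕ δ) R →ₗ[R] Matrix α γ R where
  toFun := Matrix.toBlocks₁₁
  map_add' _ _ := rfl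
  map_smul' _ _ := rfl

def blk₁₂ : Matrix (α ⊕ β) (γ ⊕ δ) R →ₗ[R] Matrix α δ R where
  toFun := Matrix.toBlocks₁₂
  map_add' _ _ := rfl
  map_smul' _ _ := rfl

def blk₂₁ : Matrix (α ⊕ β) (γ ⊕ δ) R →ₗ[R] Matrix β γ R where
  toFun := Matrix.toBlocks₂₁
  map_add' _ _ := rfl
  map_smul' _ _ := rfl

def blk₂₂ : Matrix (α ⊕ β) (γ ⊕ δ) R →ₗ[R] Matrix β δ R where
  toFun := Matrix.toBlocks₂₂
  map_add' _ _ := rfl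
  map_smul' _ _ := rfl

@[simp] lemma blk₁₁_fromBlocks (A : Matrix α γ R) (B : Matrix α δ R)
    (C : Matrix β γ R) (D : Matrix β δ R) :
    (blk₁₁ : Matrix (α ⊕ β) (γ ⊕ δ) R →ₗ[R] _) (Matrix.fromBlocks A B C D) = A :=
  Matrix.toBlocks_fromBlocks₁₁ A B C D

@[simp] lemma blk₁₂_fromBlocks (A : Matrix α γ R) (B : Matrix α δ R)
    (C : Matrix β γ R) (D : Matrix β δ R) :
    (blk₁₂ : Matrix (α ⊕ β) (γ ⊕ δ) R →ₗ[R] _) (Matrix.fromBlocks A B C D) = B :=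
  Matrix.toBlocks_fromBlocks₁₂ A B C D

@[simp] lemma blk₂₁_fromBlocks (A : Matrix α γ R) (B : Matrix α δ R)
    (C : Matrix β γ R) (D : Matrix β δ R) :
    (blk₂₁ : Matrix (α ⊕ β) (γ ⊕ δ) R →ₗ[R] _) (Matrix.fromBlocks A B C D) = C :=
  Matrix.toBlocks_fromBlocks₂₁ A B C D

@[simp] lemma blk₂₂_fromBlocks (A : Matrix α γ R) (B : Matrix α δ R)
    (C : Matrix β γ R) (D : Matrix β δ R) :
    (blk₂₂ : Matrix (α ⊕ β) (γ ⊕ δ) R →ₗ[R] _) (Matrix.fromBlocks A B C D) = D :=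
  Matrix.toBlocks_fromBlocks₂₂ A B C D

def emb₁₁ : Matrix α γ R →ₗ[R] Matrix (α ⊕ β) (γ ⊕ δ) R where
  toFun M := Matrix.fromBlocks M 0 0 0
  map_add' M N := by ext (i | i) (j | j) <;> simp
  map_smul' r M := by ext (i | i) (j | j) <;> simp

def emb₁₂ : Matrix α δ R →ₗ[R] Matrix (α ⊕ β) (γ ⊕ δ) R where
  toFun M := Matrix.fromBlocks 0 M 0 0
  map_add' M N := by ext (i | i) (j | j) <;> simp
  map_smul' r M := by ext (i | i) (j | j) <;> simp

def emb₂₁ : Matrix β γ R →ₗ[R] Matrix (α ⊕ β) (γ ⊕ δ) R where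
  toFun M := Matrix.fromBlocks 0 0 M 0
  map_add' M N := by ext (i | i) (j | j) <;> simp
  map_smul' r M := by ext (i | i) (j | j) <;> simp

def emb₂₂ : Matrix β δ R →ₗ[R] Matrix (α ⊕ β) (γ ⊕ δ) R where
  toFun M := Matrix.fromBlocks 0 0 0 M
  map_add' M N := by ext (i | i) (j | j) <;> simp
  map_smul' r M := by ext (i | i) (j | j) <;> simp

@[simp] lemma emb₁₁_apply (M : Matrix α γ R) :
    (emb₁₁ M : Matrix (α ⊕ β) (γ ⊕ δ) R) = Matrix.fromBlocks M 0 0 0 := rfl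
@[simp] lemma emb₁₂_apply (M : Matrix α δ R) :
    (emb₁₂ M : Matrix (α ⊕ β) (γ ⊕ δ) R) = Matrix.fromBlocks 0 M 0 0 := rfl
@[simp] lemma emb₂₁_apply (M : Matrix β γ R) :
    (emb₂₁ M : Matrix (α ⊕ β) (γ ⊕ δ) R) = Matrix.fromBlocks 0 0 M 0 := rfl
@[simp] lemma emb₂₂_apply (M : Matrix β δ R) :
    (emb₂₂ M : Matrix (α ⊕ β) (γ ⊕ δ) R) = Matrix.fromBlocks 0 0 0 M := rfl

lemma fromBlocks_sub [AddGroup R] (A A' : Matrix α γ R) (B B' : Matrix α δ R)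
    (C C' : Matrix β γ R) (D D' : Matrix β δ R) :
    Matrix.fromBlocks A B C D - Matrix.fromBlocks A' B' C' D'
      = Matrix.fromBlocks (A - A') (B - B') (C - C') (D - D') := by
  ext (i | i) (j | j) <;> simp [Matrix.fromBlocks]

end Blocks

/-- `submatrix` as a linear map -/
def submatrixLin {α β α' β' : Type*} (f : α → α') (g : β → β') :
    Matrix α' β' R →ₗ[R] Matrix α β R where
  toFun M := M.submatrix f g
  map_add' _ _ := rfl
  map_smul' _ _ := rfl

@[simp] lemma submatrixLin_apply {α β α' β' : Type*} (f : α → α') (g : β → β')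
    (M : Matrix α' β' R) :
    (submatrixLin f g : Matrix α' β' R →ₗ[R] Matrix α β R) M = M.submatrix f g := rfl

/-- Generalized bilinear decomposition predicate. -/
def MatDec (R : Type*) [CommRing R] {α β γ : Type*} [Fintype α] [Fintype β] [Fintype γ]
    (ι : Type*) [Fintype ι]
    (F : Matrix α β R → Matrix β γ R → Matrix α γ R) : Prop :=
  ∃ (f : ι → (Matrix α β R →ₗ[R] R)) (g : ι → (Matrix β γ R →ₗ[R] R))
    (C : ι → Matrix α γ R),
    ∀ A B, F A B = ∑ i, (f i A * g i B) • C i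

theorem MatDec.congr {α β γ : Type*} [Fintype α] [Fintype β] [Fintype γ]
    {ι : Type*} [Fintype ι] {F G : Matrix α β R → Matrix β γ R → Matrix α γ R}
    (h : MatDec R ι F) (hFG : ∀ A B, G A B = F A B) : MatDec R ι G := by
  obtain ⟨f, g, C, hf⟩ := h
  exact ⟨f, g, C, fun A B => (hFG A B).trans (hf A B)⟩

theorem MatDec.reindexIndex {α β γ : Type*} [Fintype α] [Fintype β] [Fintype γ]
    {ι ι' : Type*} [Fintype ι] [Fintype ι']
    {F : Matrix α β R → Matrix β γ R → Matrix α γ R}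
    (h : MatDec R ι F) (e : ι' ≃ ι) : MatDec R ι' F := by
  obtain ⟨f, g, C, hf⟩ := h
  refine ⟨f ∘ e, g ∘ e, C ∘ e, fun A B => ?_⟩
  rw [hf A B]
  exact (Equiv.sum_comp e fun i => (f i A * g i B) • C i).symm

theorem MatDec.add {α β γ : Type*} [Fintype α] [Fintype β] [Fintype γ]
    {ι ι' : Type*} [Fintype ι] [Fintype ι']
    {F G : Matrix α β R → Matrix β γ R → Matrix α γ R}
    (hF : MatDec R ι F) (hG : MatDec R ι' G) :
    MatDec R (ι ⊕ ι') (fun A B => F A B + G A B) := by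
  obtain ⟨f, g, C, hf⟩ := hF
  obtain ⟨f', g', C', hg⟩ := hG
  refine ⟨Sum.elim f f', Sum.elim g g', Sum.elim C C', fun A B => ?_⟩
  rw [Fintype.sum_sum_type]
  simp only [Sum.elim_inl, Sum.elim_inr]
  rw [hf A B, hg A B]

theorem MatDec.addFin {α β γ : Type*} [Fintype α] [Fintype β] [Fintype γ]
    {r s : ℕ} {F G : Matrix α β R → Matrix β γ R → Matrix α γ R}
    (hF : MatDec R (Fin r) F) (hG : MatDec R (Fin s) G) :
    MatDec R (Fin (r + s)) (fun A B => F A B + G A B) :=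
  (hF.add hG).reindexIndex finSumFinEquiv.symm

/-- compose an algorithm for the matrix product with linear pre/post-processing -/
theorem MatDec.comp {α β γ s : Type*} [Fintype α] [Fintype β] [Fintype γ] [Fintype s]
    {ι : Type*} [Fintype ι]
    (h : MatDec R ι (fun (A : Matrix α β R) (B : Matrix β γ R) => A * B))
    (φ : Matrix s s R →ₗ[R] Matrix α β R) (ψ : Matrix s s R →ₗ[R] Matrix β γ R)
    (Θ : Matrix α γ R →ₗ[R] Matrix s s R) :
    MatDec R ι (fun A B => Θ (φ A * ψ B)) := by
  obtain ⟨f, g, C, hf⟩ := h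
  have hf' : ∀ (A : Matrix α β R) (B : Matrix β γ R),
      A * B = ∑ i, (f i A * g i B) • C i := hf
  refine ⟨fun i => (f i).comp φ, fun i => (g i).comp ψ, fun i => Θ (C i), fun A B => ?_⟩
  show Θ (φ A * ψ B) = _
  rw [hf' (φ A) (ψ B), map_sum]
  simp only [_root_.map_smul, LinearMap.comp_apply]

lemma trace_stdBasisMatrix_mul {α β : Type*} [Fintype α] [Fintype β]
    [DecidableEq α] [DecidableEq β] (p : β) (q : α) (M : Matrix β α R) :
    (Matrix.single q p (1 : R) * M).trace = M p q := by
  classical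
  simp only [Matrix.trace, Matrix.diag_apply, Matrix.mul_apply, Matrix.single,
    Matrix.of_apply, ite_mul, one_mul, zero_mul, ite_and]
  rw [Finset.sum_comm]
  simp

/-- cyclic symmetry of bilinear algorithms for matrix multiplication -/
theorem MatDec.cyclic {α β γ : Type*} [Fintype α] [Fintype β] [Fintype γ]
    [DecidableEq α] [DecidableEq β] {ι : Type*} [Fintype ι]
    (h : MatDec R ι (fun (A : Matrix α β R) (B : Matrix β γ R) => A * B)) :
    MatDec R ι (fun (X : Matrix β γ R) (Y : Matrix γ α R) => X * Y) := by
  obtain ⟨f, g, C, hf0⟩ := h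
  have hf : ∀ (A : Matrix α β R) (B : Matrix β γ R),
      A * B = ∑ i, (f i A * g i B) • C i := hf0
  refine ⟨g, fun i => traceMulLin (C i),
    fun i => Matrix.of fun p q => f i (Matrix.single q p 1), fun X Y => ?_⟩
  show X * Y = _
  ext p q
  have hE := hf (Matrix.single q p (1 : R)) X
  have key : (X * Y) p q
      = ∑ i, (f i (Matrix.single q p (1 : R)) * g i X) * (C i * Y).trace := by
    rw [← trace_stdBasisMatrix_mul p q (X * Y), ← Matrix.mul_assoc, hE,
      Matrix.sum_mul, Matrix.trace_sum]
    simp only [Matrix.smul_mul, Matrix.trace_smul, smul_eq_mul]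
  rw [key]
  simp only [Matrix.sum_apply, Matrix.smul_apply, traceMulLin_apply, Matrix.of_apply,
    smul_eq_mul]
  exact Finset.sum_congr rfl fun i _ => by ring

/-- transport along equivalences of the matrix index types -/
theorem MatDec.reindexMatrix {α β γ α' β' γ' : Type*}
    [Fintype α] [Fintype β] [Fintype γ] [Fintype α'] [Fintype β'] [Fintype γ']
    {ι : Type*} [Fintype ι]
    (e₁ : α' ≃ α) (e₂ : β' ≃ β) (e₃ : γ' ≃ γ)
    (h : MatDec R ι (fun (A : Matrix α β R) (B : Matrix β γ R) => A * B)) :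
    MatDec R ι (fun (A : Matrix α' β' R) (B : Matrix β' γ' R) => A * B) := by
  obtain ⟨f, g, C, hf0⟩ := h
  have hf : ∀ (A : Matrix α β R) (B : Matrix β γ R),
      A * B = ∑ i, (f i A * g i B) • C i := hf0
  refine ⟨fun i => (f i).comp (submatrixLin ⇑e₁.symm ⇑e₂.symm),
    fun i => (g i).comp (submatrixLin ⇑e₂.symm ⇑e₃.symm),
    fun i => (C i).submatrix ⇑e₁ ⇑e₃, fun A B => ?_⟩
  show A * B = _
  have h2 : A.submatrix ⇑e₁.symm ⇑e₂.symm * B.submatrix ⇑e₂.symm ⇑e₃.symm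
      = (A * B).submatrix ⇑e₁.symm ⇑e₃.symm :=
    Matrix.submatrix_mul_equiv A B ⇑e₁.symm e₂.symm ⇑e₃.symm
  have h4 : (A * B).submatrix ⇑e₁.symm ⇑e₃.symm
      = ∑ i, (f i (A.submatrix ⇑e₁.symm ⇑e₂.symm)
          * g i (B.submatrix ⇑e₂.symm ⇑e₃.symm)) • C i := by
    rw [← h2]; exact hf _ _
  have h5 := congrArg (fun M => M.submatrix ⇑e₁ ⇑e₃) h4
  rw [Matrix.submatrix_submatrix, Equiv.symm_comp_self, Equiv.symm_comp_self,
    Matrix.submatrix_id_id] at h5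
  rw [h5]
  ext x y
  simp only [Matrix.sum_apply, Matrix.submatrix_apply, Matrix.smul_apply,
    submatrixLin_apply, LinearMap.comp_apply]

/-- the embedding `v ↪ u` as a `u × v` matrix -/
def Jmat (R : Type*) [CommRing R] {u v : ℕ} (h : v ≤ u) : Matrix (Fin u) (Fin v) R :=
  Matrix.of fun i j => if i = Fin.castLE h j then 1 else 0

lemma Jt_mul_J {u v : ℕ} (h : v ≤ u) :
    (Jmat R h)ᵀ * Jmat R h = (1 : Matrix (Fin v) (Fin v) R) := by
  ext j k
  simp only [Matrix.mul_apply, Matrix.transpose_apply, Jmat, Matrix.of_apply, ite_mul,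
    one_mul, zero_mul, Finset.sum_ite_eq', Finset.mem_univ, if_true, Fin.castLE_inj,
    Matrix.one_apply]

lemma Jt_J_mul {u v : ℕ} (h : v ≤ u) {κ : Type*} (X : Matrix (Fin v) κ R) :
    (Jmat R h)ᵀ * (Jmat R h * X) = X := by
  rw [← Matrix.mul_assoc, Jt_mul_J, Matrix.one_mul]

lemma mul_Jt_J {u v : ℕ} (h : v ≤ u) {κ : Type*} [Fintype κ] (X : Matrix κ (Fin v) R) :
    X * ((Jmat R h)ᵀ * Jmat R h) = X := by
  rw [Jt_mul_J, Matrix.mul_one]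

section Seven

variable {R : Type*} [CommRing R]

def φ₁ (R : Type*) [CommRing R] {u v : ℕ} (h : v ≤ u) : Matrix (Fin u ⊕ Fin v) (Fin u ⊕ Fin v) R →ₗ[R] Matrix (Fin u) (Fin u) R :=
  blk₁₁ + (lmul (Jmat R h)).comp ((rmul (Jmat R h)ᵀ).comp blk₂₂)
def Θ₁ (R : Type*) [CommRing R] {u v : ℕ} (h : v ≤ u) : Matrix (Fin u) (Fin u) R →ₗ[R] Matrix (Fin u ⊕ Fin v) (Fin u ⊕ Fin v) R :=
  emb₁₁ + emb₂₂.comp ((lmul (Jmat R h)ᵀ).comp (rmul (Jmat R h)))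

def φ₂ (R : Type*) [CommRing R] {u v : ℕ} (h : v ≤ u) : Matrix (Fin u ⊕ Fin v) (Fin u ⊕ Fin v) R →ₗ[R] Matrix (Fin v) (Fin u) R :=
  blk₂₁ + (rmul (Jmat R h)ᵀ).comp blk₂₂
def ψ₂ (R : Type*) [CommRing R] {u v : ℕ} (h : v ≤ u) : Matrix (Fin u ⊕ Fin v) (Fin u ⊕ Fin v) R →ₗ[R] Matrix (Fin u) (Fin u) R := blk₁₁
def Θ₂ (R : Type*) [CommRing R] {u v : ℕ} (h : v ≤ u) : Matrix (Fin v) (Fin u) R →ₗ[R] Matrix (Fin u ⊕ Fin v) (Fin u ⊕ Fin v) R :=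
  emb₂₁ - emb₂₂.comp (rmul (Jmat R h))

def φ₃ (R : Type*) [CommRing R] {u v : ℕ} (h : v ≤ u) : Matrix (Fin u ⊕ Fin v) (Fin u ⊕ Fin v) R →ₗ[R] Matrix (Fin u) (Fin u) R := blk₁₁
def ψ₃ (R : Type*) [CommRing R] {u v : ℕ} (h : v ≤ u) : Matrix (Fin u ⊕ Fin v) (Fin u ⊕ Fin v) R →ₗ[R] Matrix (Fin u) (Fin v) R :=
  blk₁₂ - (lmul (Jmat R h)).comp blk₂₂
def Θ₃ (R : Type*) [CommRing R] {u v : ℕ} (h : v ≤ u) : Matrix (Fin u) (Fin v) R →ₗ[R] Matrix (Fin u ⊕ Fin v) (Fin u ⊕ Fin v) R :=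
  emb₁₂ + emb₂₂.comp (lmul (Jmat R h)ᵀ)

def φ₄ (R : Type*) [CommRing R] {u v : ℕ} (h : v ≤ u) : Matrix (Fin u ⊕ Fin v) (Fin u ⊕ Fin v) R →ₗ[R] Matrix (Fin v) (Fin v) R := blk₂₂
def ψ₄ (R : Type*) [CommRing R] {u v : ℕ} (h : v ≤ u) : Matrix (Fin u ⊕ Fin v) (Fin u ⊕ Fin v) R →ₗ[R] Matrix (Fin v) (Fin u) R :=
  blk₂₁ - (lmul (Jmat R h)ᵀ).comp blk₁₁
def Θ₄ (R : Type*) [CommRing R] {u v : ℕ} (h : v ≤ u) : Matrix (Fin v) (Fin u) R →ₗ[R] Matrix (Fin u ⊕ Fin v) (Fin u ⊕ Fin v) R :=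
  emb₁₁.comp (lmul (Jmat R h)) + emb₂₁

def φ₅ (R : Type*) [CommRing R] {u v : ℕ} (h : v ≤ u) : Matrix (Fin u ⊕ Fin v) (Fin u ⊕ Fin v) R →ₗ[R] Matrix (Fin u) (Fin v) R :=
  (rmul (Jmat R h)).comp blk₁₁ + blk₁₂
def ψ₅ (R : Type*) [CommRing R] {u v : ℕ} (h : v ≤ u) : Matrix (Fin u ⊕ Fin v) (Fin u ⊕ Fin v) R →ₗ[R] Matrix (Fin v) (Fin v) R := blk₂₂
def Θ₅ (R : Type*) [CommRing R] {u v : ℕ} (h : v ≤ u) : Matrix (Fin u) (Fin v) R →ₗ[R] Matrix (Fin u ⊕ Fin v) (Fin u ⊕ Fin v) R :=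
  emb₁₂ - emb₁₁.comp (rmul (Jmat R h)ᵀ)

def φ₆ (R : Type*) [CommRing R] {u v : ℕ} (h : v ≤ u) : Matrix (Fin u ⊕ Fin v) (Fin u ⊕ Fin v) R →ₗ[R] Matrix (Fin v) (Fin u) R :=
  blk₂₁ - (lmul (Jmat R h)ᵀ).comp blk₁₁
def ψ₆ (R : Type*) [CommRing R] {u v : ℕ} (h : v ≤ u) : Matrix (Fin u ⊕ Fin v) (Fin u ⊕ Fin v) R →ₗ[R] Matrix (Fin u) (Fin v) R :=
  (rmul (Jmat R h)).comp blk₁₁ + blk₁₂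
def Θ₆ (R : Type*) [CommRing R] {u v : ℕ} (h : v ≤ u) : Matrix (Fin v) (Fin v) R →ₗ[R] Matrix (Fin u ⊕ Fin v) (Fin u ⊕ Fin v) R := emb₂₂

def φ₇ (R : Type*) [CommRing R] {u v : ℕ} (h : v ≤ u) : Matrix (Fin u ⊕ Fin v) (Fin u ⊕ Fin v) R →ₗ[R] Matrix (Fin u) (Fin v) R :=
  blk₁₂ - (lmul (Jmat R h)).comp blk₂₂
def ψ₇ (R : Type*) [CommRing R] {u v : ℕ} (h : v ≤ u) : Matrix (Fin u ⊕ Fin v) (Fin u ⊕ Fin v) R →ₗ[R] Matrix (Fin v) (Fin u) R :=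
  blk₂₁ + (rmul (Jmat R h)ᵀ).comp blk₂₂
def Θ₇ (R : Type*) [CommRing R] {u v : ℕ} (h : v ≤ u) : Matrix (Fin u) (Fin u) R →ₗ[R] Matrix (Fin u ⊕ Fin v) (Fin u ⊕ Fin v) R := emb₁₁

theorem heart (R : Type*) [CommRing R] {u v : ℕ} (h : v ≤ u)
    (A B : Matrix (Fin u ⊕ Fin v) (Fin u ⊕ Fin v) R) :
    A * B =
      (((((Θ₁ R h (φ₁ R h A * φ₁ R h B)
        + Θ₃ R h (φ₃ R h A * ψ₃ R h B))
        + Θ₇ R h (φ₇ R h A * ψ₇ R h B))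
        + Θ₂ R h (φ₂ R h A * ψ₂ R h B))
        + Θ₄ R h (φ₄ R h A * ψ₄ R h B))
        + Θ₆ R h (φ₆ R h A * ψ₆ R h B))
        + Θ₅ R h (φ₅ R h A * ψ₅ R h B) := by
  rw [← Matrix.fromBlocks_toBlocks A, ← Matrix.fromBlocks_toBlocks B]
  set A₁ := A.toBlocks₁₁; set A₂ := A.toBlocks₁₂
  set A₃ := A.toBlocks₂₁; set A₄ := A.toBlocks₂₂
  set B₁ := B.toBlocks₁₁; set B₂ := B.toBlocks₁₂
  set B₃ := B.toBlocks₂₁; set B₄ := B.toBlocks₂₂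
  clear_value A₁ A₂ A₃ A₄ B₁ B₂ B₃ B₄
  simp only [φ₁, φ₂, φ₃, φ₄, φ₅, φ₆, φ₇, ψ₂, ψ₃, ψ₄, ψ₅, ψ₆, ψ₇,
    Θ₁, Θ₂, Θ₃, Θ₄, Θ₅, Θ₆, Θ₇,
    LinearMap.add_apply, LinearMap.sub_apply, LinearMap.comp_apply,
    lmul_apply, rmul_apply, blk₁₁_fromBlocks, blk₁₂_fromBlocks, blk₂₁_fromBlocks,
    blk₂₂_fromBlocks, emb₁₁_apply, emb₁₂_apply, emb₂₁_apply, emb₂₂_apply,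
    Matrix.fromBlocks_multiply]
  simp only [Matrix.fromBlocks_add, fromBlocks_sub]
  rw [Matrix.fromBlocks_inj]
  refine ⟨?_, ?_, ?_, ?_⟩ <;>
  · simp only [Matrix.mul_add, Matrix.add_mul, Matrix.mul_sub, Matrix.sub_mul,
      Matrix.mul_assoc, Jt_J_mul, mul_Jt_J, Jt_mul_J, Matrix.mul_one, Matrix.one_mul,
      Matrix.zero_mul, Matrix.mul_zero, add_zero, zero_add, sub_zero, zero_sub]
    abel

end Seven

end DivideAndConquerAux

open DivideAndConquerAux in
/-- Proposition 1 (divide-and-conquer bound):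
⟨u+v,u+v,u+v⟩ ≤ ⟨u,u,u⟩ + 3⟨u,u,v⟩ + 3⟨v,v,u⟩ when `u > v`. -/
theorem bilinearAlgorithm_divide_and_conquer (R : Type*) [CommRing R]
    (u v a b c : ℕ) (hv : 0 < v) (huv : v < u)
    (ha : BilinearAlgorithm R u u u a)
    (hb : BilinearAlgorithm R u u v b)
    (hc : BilinearAlgorithm R v v u c) :
    BilinearAlgorithm R (u + v) (u + v) (u + v) (a + 3 * b + 3 * c) := by
  have h : v ≤ u := le_of_lt huv
  have ha' : MatDec R (Fin a)
      (fun (A : Matrix (Fin u) (Fin u) R) (B : Matrix (Fin u) (Fin u) R) => A * B) := ha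
  have hb' : MatDec R (Fin b)
      (fun (A : Matrix (Fin u) (Fin u) R) (B : Matrix (Fin u) (Fin v) R) => A * B) := hb
  have hc' : MatDec R (Fin c)
      (fun (A : Matrix (Fin v) (Fin v) R) (B : Matrix (Fin v) (Fin u) R) => A * B) := hc
  have hb_uvu := hb'.cyclic
  have hb_vuu := hb_uvu.cyclic
  have hc_vuv := hc'.cyclic
  have hc_uvv := hc_vuv.cyclic
  have p1 := ha'.comp (φ₁ R h) (φ₁ R h) (Θ₁ R h)
  have p3 := hb'.comp (φ₃ R h) (ψ₃ R h) (Θ₃ R h)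
  have p7 := hb_uvu.comp (φ₇ R h) (ψ₇ R h) (Θ₇ R h)
  have p2 := hb_vuu.comp (φ₂ R h) (ψ₂ R h) (Θ₂ R h)
  have p4 := hc'.comp (φ₄ R h) (ψ₄ R h) (Θ₄ R h)
  have p6 := hc_vuv.comp (φ₆ R h) (ψ₆ R h) (Θ₆ R h)
  have p5 := hc_uvv.comp (φ₅ R h) (ψ₅ R h) (Θ₅ R h)
  have big := (((((p1.addFin p3).addFin p7).addFin p2).addFin p4).addFin p6).addFin p5
  have big2 : MatDec R (Fin (a + b + b + b + c + c + c))
      (fun (A B : Matrix (Fin u ⊕ Fin v) (Fin u ⊕ Fin v) R) => A * B) :=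
    big.congr (fun A B => heart R h A B)
  have big3 := big2.reindexMatrix finSumFinEquiv.symm finSumFinEquiv.symm finSumFinEquiv.symm
  have big4 := big3.reindexIndex
    (finCongr (show a + 3 * b + 3 * c = a + b + b + b + c + c + c by ring))
  exact big4
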